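/- arXiv:1301.3243 — 2 statements merged into one kernel-verified Lean document; each statement's English description precedes it below -/
import Mathlib

section
/- For a > 0, b > 0, σ > 0 and 1 < α < 2, the Laplace transform L(λ) = exp{ -∫₀^λ α a dz / (α b + σ^α z^{α-1}) } admits the expansion L(λ) = 1 - (a/b)λ + (a σ^α / (α² b²)) λ^α + o(λ^α) as λ → 0+. -/
open Real Filter Asymptotics

lemma rpow_littleO_aux (p q : ℝ) (hq : 0 ≤ q) (h : q < p) :
    (fun x : ℝ => x ^ p) =o[nhdsWithin 0 (Set.Ioi 0)] (fun x => x ^ q) := by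
  have hpq : 0 < p - q := by linarith
  have ht : Filter.Tendsto (fun x : ℝ => x ^ (p - q)) (nhdsWithin 0 (Set.Ioi 0)) (nhds 0) := by
    have h0 := (Real.continuous_rpow_const hpq.le).tendsto 0
    rw [Real.zero_rpow hpq.ne'] at h0
    exact h0.mono_left nhdsWithin_le_nhds
  have h1 : (fun x : ℝ => x ^ (p - q)) =o[nhdsWithin 0 (Set.Ioi 0)] (fun _ => (1 : ℝ)) :=
    (Asymptotics.isLittleO_one_iff ℝ).mpr ht
  have h2 := (Asymptotics.isBigO_refl (fun x : ℝ => x ^ q) (nhdsWithin 0 (Set.Ioi 0))).mul_isLittleO h1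
  refine h2.congr' ?_ ?_
  · filter_upwards [self_mem_nhdsWithin] with x hx
    rw [← Real.rpow_add hx]
    ring_nf
  · filter_upwards with x
    simp

theorem stmt5 (a b σ α : ℝ) (ha : 0 < a) (hb : 0 < b) (hσ : 0 < σ)
    (hα1 : 1 < α) (hα2 : α < 2)
    (L : ℝ → ℝ)
    (hL : ∀ lam, L lam =
      Real.exp (-∫ z in (0:ℝ)..lam, α * a / (α * b + σ ^ α * z ^ (α - 1)))) :
    (fun lam => L lam - (1 - (a / b) * lam + (a * σ ^ α / (α ^ 2 * b ^ 2)) * lam ^ α))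
      =o[nhdsWithin 0 (Set.Ioi 0)] (fun lam => lam ^ α) := by
  have hα0 : (0:ℝ) < α := by linarith
  have hαb : 0 < α * b := by positivity
  set F : ℝ → ℝ := fun z => α * a / (α * b + σ ^ α * z ^ (α - 1)) with hF_def
  set c : ℝ := a / b with hc_def
  set d : ℝ := a * σ ^ α / (α ^ 2 * b ^ 2) with hd_def
  set e : ℝ := a * σ ^ α / (α * b ^ 2) with he_def
  set M : ℝ := a * σ ^ (2 * α) / (α ^ 2 * b ^ 3) with hM_def
  set I : ℝ → ℝ := fun lam => ∫ z in (0:ℝ)..lam, F z with hI_def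
  -- denominator positivity on [0, ∞)
  have hD : ∀ z : ℝ, 0 ≤ z → 0 < α * b + σ ^ α * z ^ (α - 1) := by
    intro z hz
    have h1 : 0 ≤ σ ^ α * z ^ (α - 1) :=
      mul_nonneg (Real.rpow_nonneg hσ.le α) (Real.rpow_nonneg hz _)
    linarith
  have hcontp : Continuous (fun z : ℝ => z ^ (α - 1)) :=
    Real.continuous_rpow_const (by linarith)
  have hcontp2 : Continuous (fun z : ℝ => z ^ (2 * α - 2)) :=
    Real.continuous_rpow_const (by linarith)
  have hFcont : ContinuousOn F (Set.Ici 0) := by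
    apply ContinuousOn.div continuousOn_const
    · exact (continuousOn_const.add (continuousOn_const.mul hcontp.continuousOn))
    · intro z hz
      exact (hD z hz).ne'
  -- integrabilities
  have hFint : ∀ lam : ℝ, 0 < lam → IntervalIntegrable F MeasureTheory.volume 0 lam := by
    intro lam hlam
    apply ContinuousOn.intervalIntegrable
    rw [Set.uIcc_of_le hlam.le]
    exact hFcont.mono (Set.Icc_subset_Ici_self)
  have hEint : ∀ lam : ℝ, IntervalIntegrable (fun z => e * z ^ (α - 1))
      MeasureTheory.volume 0 lam := by
    intro lam
    exact (continuous_const.mul hcontp).intervalIntegrable 0 lam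
  -- integral of the power term
  have hpow_int : ∀ lam : ℝ, 0 < lam →
      (∫ z in (0:ℝ)..lam, e * z ^ (α - 1)) = d * lam ^ α := by
    intro lam hlam
    rw [intervalIntegral.integral_const_mul, integral_rpow (Or.inl (by linarith))]
    have h1 : α - 1 + 1 = α := by ring
    rw [h1, Real.zero_rpow hα0.ne']
    rw [hd_def, he_def]
    field_simp
    ring
  -- bounds on I
  have hI_nonneg : ∀ lam : ℝ, 0 < lam → 0 ≤ I lam := by
    intro lam hlam
    apply intervalIntegral.integral_nonneg hlam.le
    intro z hz
    exact div_nonneg (by positivity) (hD z hz.1).le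
  have hI_le : ∀ lam : ℝ, 0 < lam → I lam ≤ c * lam := by
    intro lam hlam
    have h1 : I lam ≤ ∫ _ in (0:ℝ)..lam, c := by
      apply intervalIntegral.integral_mono_on hlam.le (hFint lam hlam)
        (intervalIntegrable_const)
      intro z hz
      have hDz := hD z hz.1
      have h2 : α * a / (α * b + σ ^ α * z ^ (α - 1)) ≤ α * a / (α * b) := by
        apply div_le_div_of_nonneg_left (by positivity) hαb
        have : 0 ≤ σ ^ α * z ^ (α - 1) :=
          mul_nonneg (Real.rpow_nonneg hσ.le α) (Real.rpow_nonneg hz.1 _)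
        linarith
      have h3 : α * a / (α * b) = c := by
        rw [hc_def]; field_simp
      calc F z ≤ α * a / (α * b) := h2
        _ = c := h3
    rwa [intervalIntegral.integral_const, smul_eq_mul, sub_zero, mul_comm] at h1
  -- the key integral estimate
  have hkey : ∀ lam : ℝ, 0 < lam →
      |I lam - (c * lam - d * lam ^ α)| ≤ M / (2 * α - 1) * lam ^ (2 * α - 1) := by
    intro lam hlam
    have hsub : I lam - (c * lam - d * lam ^ α)
        = ∫ z in (0:ℝ)..lam, (F z - c + e * z ^ (α - 1)) := by
      rw [intervalIntegral.integral_add ((hFint lam hlam).sub intervalIntegrable_const)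
        (hEint lam), intervalIntegral.integral_sub (hFint lam hlam) intervalIntegrable_const,
        intervalIntegral.integral_const, hpow_int lam hlam, smul_eq_mul, sub_zero]
      ring
    rw [hsub]
    have hb1 : ‖∫ z in (0:ℝ)..lam, (F z - c + e * z ^ (α - 1))‖
        ≤ |∫ z in (0:ℝ)..lam, M * z ^ (2 * α - 2)| := by
      apply intervalIntegral.norm_integral_le_abs_of_norm_le
      · filter_upwards [MeasureTheory.ae_restrict_mem measurableSet_uIoc] with t ht
        rw [Set.uIoc_of_le hlam.le] at ht
        have ht0 : 0 < t := ht.1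
        have hDt := hD t ht0.le
        have hgt : F t - c + e * t ^ (α - 1)
            = a * (σ ^ α * σ ^ α) * (t ^ (α - 1) * t ^ (α - 1))
              / (α * b ^ 2 * (α * b + σ ^ α * t ^ (α - 1))) := by
          rw [hF_def, hc_def, he_def]
          field_simp
          ring
        have hsq1 : σ ^ α * σ ^ α = σ ^ (2 * α) := by
          rw [← Real.rpow_add hσ]; ring_nf
        have hsq2 : t ^ (α - 1) * t ^ (α - 1) = t ^ (2 * α - 2) := by
          rw [← Real.rpow_add ht0]; ring_nf
        rw [hgt, hsq1, hsq2, Real.norm_eq_abs, abs_of_nonneg (by positivity)]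
        have hM2 : M * t ^ (2 * α - 2)
            = a * σ ^ (2 * α) * t ^ (2 * α - 2) / (α * b ^ 2 * (α * b)) := by
          rw [hM_def]; field_simp
        rw [hM2]
        apply div_le_div_of_nonneg_left (by positivity) (by positivity)
        have : 0 ≤ σ ^ α * t ^ (α - 1) :=
          mul_nonneg (Real.rpow_nonneg hσ.le α) (Real.rpow_nonneg ht0.le _)
        nlinarith [mul_nonneg (by positivity : (0:ℝ) ≤ α * b ^ 2) this]
      · exact (continuous_const.mul hcontp2).intervalIntegrable 0 lam
    have hb2 : (∫ z in (0:ℝ)..lam, M * z ^ (2 * α - 2))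
        = M / (2 * α - 1) * lam ^ (2 * α - 1) := by
      rw [intervalIntegral.integral_const_mul, integral_rpow (Or.inl (by linarith))]
      have h1 : 2 * α - 2 + 1 = 2 * α - 1 := by ring
      rw [h1, Real.zero_rpow (by intro h; nlinarith)]
      field_simp
      ring
    rw [← Real.norm_eq_abs]
    calc ‖∫ z in (0:ℝ)..lam, (F z - c + e * z ^ (α - 1))‖
        ≤ |∫ z in (0:ℝ)..lam, M * z ^ (2 * α - 2)| := hb1
      _ = |M / (2 * α - 1) * lam ^ (2 * α - 1)| := by rw [hb2]
      _ = M / (2 * α - 1) * lam ^ (2 * α - 1) := by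
          apply abs_of_nonneg
          have : (0:ℝ) < 2 * α - 1 := by linarith
          positivity
  -- the bound function
  set B : ℝ → ℝ := fun lam => c ^ 2 * lam ^ 2 + M / (2 * α - 1) * lam ^ (2 * α - 1)
    with hB_def
  -- eventual bound
  have hev : ∀ᶠ lam in nhdsWithin 0 (Set.Ioi 0),
      ‖L lam - (1 - (a / b) * lam + (a * σ ^ α / (α ^ 2 * b ^ 2)) * lam ^ α)‖
        ≤ 1 * ‖B lam‖ := by
    have hmem : Set.Ioo (0:ℝ) (b / a) ∈ nhdsWithin 0 (Set.Ioi 0) :=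
      Ioo_mem_nhdsGT_of_mem ⟨le_refl 0, by positivity⟩
    filter_upwards [hmem] with lam hlam
    obtain ⟨hlam0, hlam1⟩ := hlam
    have hI0 := hI_nonneg lam hlam0
    have hI1 := hI_le lam hlam0
    have hIle1 : I lam ≤ 1 := by
      have : c * lam ≤ c * (b / a) := by
        apply mul_le_mul_of_nonneg_left hlam1.le (by positivity)
      have hcb : c * (b / a) = 1 := by rw [hc_def]; field_simp
      linarith
    have hexp : |Real.exp (-(I lam)) - 1 - (-(I lam))| ≤ (-(I lam)) ^ 2 := by
      apply Real.abs_exp_sub_one_sub_id_le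
      rw [abs_neg, abs_of_nonneg hI0]
      exact hIle1
    have hI2 : (-(I lam)) ^ 2 ≤ c ^ 2 * lam ^ 2 := by
      have h0 : (-(I lam)) ^ 2 = I lam ^ 2 := by ring
      rw [h0]
      nlinarith [sq_nonneg (c * lam - I lam)]
    have hLlam := hL lam
    have hdecomp : L lam - (1 - (a / b) * lam + (a * σ ^ α / (α ^ 2 * b ^ 2)) * lam ^ α)
        = (Real.exp (-(I lam)) - 1 - (-(I lam))) + ((c * lam - d * lam ^ α) - I lam) := by
      rw [hLlam, hc_def, hd_def, show I lam = intervalIntegral F 0 lam MeasureTheory.volume from rfl]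
      ring_nf
    rw [hdecomp, Real.norm_eq_abs, one_mul]
    have hkey1 := hkey lam hlam0
    have habs : |(c * lam - d * lam ^ α) - I lam| ≤ M / (2 * α - 1) * lam ^ (2 * α - 1) := by
      rw [abs_sub_comm]; exact hkey1
    calc |(Real.exp (-(I lam)) - 1 - (-(I lam))) + ((c * lam - d * lam ^ α) - I lam)|
        ≤ |Real.exp (-(I lam)) - 1 - (-(I lam))| + |(c * lam - d * lam ^ α) - I lam| :=
          abs_add_le _ _
      _ ≤ c ^ 2 * lam ^ 2 + M / (2 * α - 1) * lam ^ (2 * α - 1) := by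
          have := hexp.trans hI2
          linarith
      _ = B lam := rfl
      _ ≤ ‖B lam‖ := le_abs_self _
  -- B is little-o of lam ^ α
  have hB_littleO : B =o[nhdsWithin 0 (Set.Ioi 0)] (fun lam => lam ^ α) := by
    have h1 : (fun lam : ℝ => lam ^ (2:ℝ)) =o[nhdsWithin 0 (Set.Ioi 0)]
        (fun lam => lam ^ α) := rpow_littleO_aux 2 α hα0.le hα2
    have h1' : (fun lam : ℝ => lam ^ (2:ℕ)) =o[nhdsWithin 0 (Set.Ioi 0)]
        (fun lam => lam ^ α) := by
      refine h1.congr' ?_ (by rfl)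
      filter_upwards with x
      rw [← Real.rpow_natCast x 2]
      norm_num
    have h2 : (fun lam : ℝ => lam ^ (2 * α - 1)) =o[nhdsWithin 0 (Set.Ioi 0)]
        (fun lam => lam ^ α) := rpow_littleO_aux (2 * α - 1) α hα0.le (by linarith)
    exact (h1'.const_mul_left (c ^ 2)).add (h2.const_mul_left (M / (2 * α - 1)))
  exact (Asymptotics.isBigO_iff.mpr ⟨1, hev⟩).trans_isLittleO hB_littleO
end

section
/- Suppose a transition semigroup (P_t) on [0,∞) satisfies |P_t f(x) - P_t f(y)| ≤ 2‖f‖_∞ (1 - e^{-v̄_t |x-y|}) for all bounded measurable f, where v̄_t > 0, and μ is an invariant probability measure on [0,∞) with Laplace transform L_μ satisfying 1 - L_μ(λ) ≤ (a/b)λ. Then for every x ≥ 0 and t ≥ 0, ‖P_t(x,·) - μ‖_var ≤ 2(1 - e^{-v̄_t x}) + 2 (a/b) v̄_t. -/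
open MeasureTheory Real

theorem stmt7 (a b : ℝ) (ha : 0 < a) (hb : 0 < b)
    (vbar : ℝ → ℝ) (hv : ∀ t, 0 < vbar t)
    (P : ℝ → ℝ → Measure ℝ)
    (hprob : ∀ t x, IsProbabilityMeasure (P t x))
    (hcontract : ∀ t ≥ (0:ℝ), ∀ x ≥ (0:ℝ), ∀ y ≥ (0:ℝ), ∀ f : ℝ → ℝ, Measurable f →
      ∀ C : ℝ, (∀ z, |f z| ≤ C) →
      |(∫ z, f z ∂(P t x)) - ∫ z, f z ∂(P t y)|
        ≤ 2 * C * (1 - Real.exp (-vbar t * |x - y|)))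
    (μ : Measure ℝ) [IsProbabilityMeasure μ]
    (hsupp : ∀ᵐ z ∂μ, 0 ≤ z)
    (hinv : ∀ t ≥ (0:ℝ), ∀ f : ℝ → ℝ, Measurable f → (∀ z, |f z| ≤ 1) →
      ∫ x, (∫ z, f z ∂(P t x)) ∂μ = ∫ z, f z ∂μ)
    (hlap : ∀ lam ≥ (0:ℝ), 1 - ∫ z, Real.exp (-lam * z) ∂μ ≤ (a / b) * lam) :
    ∀ t ≥ (0:ℝ), ∀ x ≥ (0:ℝ), ∀ f : ℝ → ℝ, Measurable f → (∀ z, |f z| ≤ 1) →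
      |(∫ z, f z ∂(P t x)) - ∫ z, f z ∂μ|
        ≤ 2 * (1 - Real.exp (-vbar t * x)) + 2 * (a / b) * vbar t := by
  intro t ht x hx f hf hC
  haveI := fun y => hprob t y
  set v := vbar t with hvdef
  have hv0 : 0 < v := hv t
  set g : ℝ → ℝ := fun y => ∫ z, f z ∂(P t y) with hg
  -- contraction for g
  have hgc : ∀ y ≥ (0:ℝ), ∀ y' ≥ (0:ℝ), |g y - g y'| ≤ 2 * (1 - Real.exp (-v * |y - y'|)) := by
    intro y hy y' hy'
    have := hcontract t ht y hy y' hy' f hf 1 hC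
    simpa using this
  -- lipschitz auxiliary
  set h : ℝ → ℝ := fun y => g (max y 0) with hh
  have hlip : LipschitzWith (Real.toNNReal (2 * v)) h := by
    apply LipschitzWith.of_dist_le_mul
    intro y y'
    have h1 : |g (max y 0) - g (max y' 0)|
        ≤ 2 * (1 - Real.exp (-v * |max y 0 - max y' 0|)) :=
      hgc _ (le_max_right _ _) _ (le_max_right _ _)
    have h2 : 1 - Real.exp (-v * |max y 0 - max y' 0|) ≤ v * |max y 0 - max y' 0| := by
      have hexp := Real.one_sub_le_exp_neg (v * |max y 0 - max y' 0|)
      rw [neg_mul]; linarith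
    have h3 : |max y 0 - max y' 0| ≤ |y - y'| := abs_max_sub_max_le_abs y y' 0
    have hco : (((2 * v).toNNReal : NNReal) : ℝ) = 2 * v :=
      Real.coe_toNNReal _ (by positivity)
    simp only [Real.dist_eq]
    calc |h y - h y'| ≤ 2 * (1 - Real.exp (-v * |max y 0 - max y' 0|)) := h1
      _ ≤ 2 * (v * |max y 0 - max y' 0|) := by nlinarith
      _ ≤ (Real.toNNReal (2 * v) : ℝ) * |y - y'| := by
          rw [hco]; nlinarith [abs_nonneg (y - y')]
  have hhm : Measurable h := hlip.continuous.measurable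
  have hgae : g =ᵐ[μ] h := by
    filter_upwards [hsupp] with z hz
    simp [hh, max_eq_left hz]
  -- bound on g
  have hgb : ∀ y, |g y| ≤ 1 := by
    intro y
    have : ‖∫ z, f z ∂(P t y)‖ ≤ 1 * ((P t y) Set.univ).toReal := by
      apply norm_integral_le_of_norm_le_const
      filter_upwards with z
      simpa using hC z
    simpa using this
  -- integrability of g
  have hgint : Integrable g μ := by
    apply Integrable.mono' (integrable_const (1:ℝ))
      ((hhm.aestronglyMeasurable).congr hgae.symm)
    filter_upwards with y
    simpa using hgb y
  -- invariance
  have hinvg : ∫ y, g y ∂μ = ∫ z, f z ∂μ := hinv t ht f hf hC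
  have key : g x - ∫ z, f z ∂μ = ∫ y, (g x - g y) ∂μ := by
    rw [← hinvg, integral_sub (integrable_const _) hgint, integral_const]
    simp
  -- exp integrability
  have hexpint : Integrable (fun z => Real.exp (-v * z)) μ := by
    have hm : Measurable fun z : ℝ => Real.exp (-v * z) :=
      Real.measurable_exp.comp (measurable_id.const_mul (-v))
    apply Integrable.mono' (integrable_const (1:ℝ)) hm.aestronglyMeasurable
    filter_upwards [hsupp] with z hz
    rw [Real.norm_eq_abs, abs_of_pos (Real.exp_pos _)]
    apply Real.exp_le_one_iff.mpr
    nlinarith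
  have h2int : Integrable (fun y => 2 * (1 - Real.exp (-v * y))) μ := by
    exact ((integrable_const (1:ℝ)).sub hexpint).const_mul 2
  have hbint : Integrable (fun y => 2 * (1 - Real.exp (-v * x)) + 2 * (1 - Real.exp (-v * y))) μ :=
    (integrable_const _).add h2int
  -- pointwise bound a.e.
  have haeb : ∀ᵐ y ∂μ, |g x - g y|
      ≤ 2 * (1 - Real.exp (-v * x)) + 2 * (1 - Real.exp (-v * y)) := by
    filter_upwards [hsupp] with y hy
    have h1 : |g x - g y| ≤ 2 * (1 - Real.exp (-v * |x - y|)) := hgc x hx y hy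
    have h2 : Real.exp (-v * x) * Real.exp (-v * y) ≤ Real.exp (-v * |x - y|) := by
      rw [← Real.exp_add]
      apply Real.exp_le_exp.mpr
      have : |x - y| ≤ x + y := abs_le.mpr ⟨by linarith, by linarith⟩
      nlinarith
    have hx1 : Real.exp (-v * x) ≤ 1 := Real.exp_le_one_iff.mpr (by nlinarith)
    have hy1 : Real.exp (-v * y) ≤ 1 := Real.exp_le_one_iff.mpr (by nlinarith)
    nlinarith
  -- integral bound
  have hint1 : Integrable (fun y => |g x - g y|) μ :=
    ((integrable_const (g x)).sub hgint).abs
  calc |g x - ∫ z, f z ∂μ| = |∫ y, (g x - g y) ∂μ| := by rw [key]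
    _ ≤ ∫ y, |g x - g y| ∂μ := by
        simpa [Real.norm_eq_abs] using
          norm_integral_le_integral_norm (fun y => g x - g y) (μ := μ)
    _ ≤ ∫ y, (2 * (1 - Real.exp (-v * x)) + 2 * (1 - Real.exp (-v * y))) ∂μ :=
        integral_mono_ae hint1 hbint haeb
    _ = 2 * (1 - Real.exp (-v * x)) + 2 * (1 - ∫ y, Real.exp (-v * y) ∂μ) := by
        rw [integral_add (integrable_const _) h2int,
          integral_const, integral_const_mul, integral_sub (integrable_const _) hexpint,
          integral_const]
        simp
    _ ≤ 2 * (1 - Real.exp (-v * x)) + 2 * ((a / b) * v) := by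
        have := hlap v hv0.le
        nlinarith
    _ = 2 * (1 - Real.exp (-v * x)) + 2 * (a / b) * v := by ring
end
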